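/- Let I be an instance of (3,B2)-SAT with variables x₁,…,xₙ and clauses c₁,…,c_m, where the three literals of each clause c are listed in a fixed order ℓ₁, ℓ₂, ℓ₃. Let G = (V,E) be the finite simple graph built as follows. For each clause c take eight vertices 1'_c, 2'_c, 1_c, 2_c, 3_c, 4_c, 5_c, 6_c with edges 1'_c1_c, 1_c3_c, 2'_c2_c, 2_c3_c, 3_c4_c, 4_c5_c, 5_c6_c. For each variable x take six vertices x, ¬x, 1_x, 2_x, 3_x, 4_x with edges x1_x, ¬x1_x, 1_x2_x, 2_x3_x, 3_x4_x. For each clause c with literals ℓ₁, ℓ₂, ℓ₃, add edges from 1'_c to the literal vertices of ℓ₁ and of ℓ₂, and an edge from 2'_c to the literal vertex of ℓ₃, where the literal vertex of a positive occurrence of x is x and of a negative occurrence is ¬x. Let U = {3_c4_c, 4_c5_c : clauses c} ∪ {1_x2_x, 2_x3_x : variables x}. Then I is satisfiable if and only if G has a minimal edge dominating set S with U ⊆ S. -/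
import Mathlib


/-- Vertices of the graph built from a (3,B2)-SAT instance for Ext Edge Dominating Set:
per clause `c` the vertices `1'_c, 2'_c, 1_c, 2_c, 3_c, 4_c, 5_c, 6_c`, per variable `x`
the vertices `x, ¬x, 1_x, 2_x, 3_x, 4_x`. -/
inductive V11 (n m : ℕ) : Type
  | p1 : Fin m → V11 n m   -- 1'_c
  | p2 : Fin m → V11 n m   -- 2'_c
  | c1 : Fin m → V11 n m
  | c2 : Fin m → V11 n m
  | c3 : Fin m → V11 n m
  | c4 : Fin m → V11 n m
  | c5 : Fin m → V11 n m
  | c6 : Fin m → V11 n m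
  | pos : Fin n → V11 n m  -- x
  | neg : Fin n → V11 n m  -- ¬x
  | x1 : Fin n → V11 n m
  | x2 : Fin n → V11 n m
  | x3 : Fin n → V11 n m
  | x4 : Fin n → V11 n m

/-- The literal vertex of an occurrence: `x` for positive, `¬x` for negative. -/
def litV11 (n m : ℕ) : Fin n × Bool → V11 n m
  | (v, true) => V11.pos v
  | (v, false) => V11.neg v

/-- Edges of the constructed graph. -/
def E11 (n m : ℕ) (lit : Fin m → Fin 3 → Fin n × Bool) : Set (Sym2 (V11 n m)) :=
  {e | (∃ j : Fin m,
          e = s(V11.p1 j, V11.c1 j) ∨ e = s(V11.c1 j, V11.c3 j) ∨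
          e = s(V11.p2 j, V11.c2 j) ∨ e = s(V11.c2 j, V11.c3 j) ∨
          e = s(V11.c3 j, V11.c4 j) ∨ e = s(V11.c4 j, V11.c5 j) ∨
          e = s(V11.c5 j, V11.c6 j)) ∨
       (∃ i : Fin n,
          e = s(V11.pos i, V11.x1 i) ∨ e = s(V11.neg i, V11.x1 i) ∨
          e = s(V11.x1 i, V11.x2 i) ∨ e = s(V11.x2 i, V11.x3 i) ∨
          e = s(V11.x3 i, V11.x4 i)) ∨
       (∃ j : Fin m,
          e = s(V11.p1 j, litV11 n m (lit j 0)) ∨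
          e = s(V11.p1 j, litV11 n m (lit j 1)) ∨
          e = s(V11.p2 j, litV11 n m (lit j 2)))}

/-- The pre-solution `U = {3_c4_c, 4_c5_c : clauses c} ∪ {1_x2_x, 2_x3_x : variables x}`. -/
def U11 (n m : ℕ) : Set (Sym2 (V11 n m)) :=
  {e | (∃ j : Fin m, e = s(V11.c3 j, V11.c4 j) ∨ e = s(V11.c4 j, V11.c5 j)) ∨
       (∃ i : Fin n, e = s(V11.x1 i, V11.x2 i) ∨ e = s(V11.x2 i, V11.x3 i))}

/-- `D` dominates every edge of `E`: each edge of `E` is in `D` or shares an endpoint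
with an edge of `D`. -/
def EDSDom {V : Type*} (E D : Set (Sym2 V)) : Prop :=
  ∀ e ∈ E, e ∈ D ∨ ∃ f ∈ D, ∃ v : V, v ∈ e ∧ v ∈ f

set_option linter.unnecessarySimpa false

namespace Stmt11

lemma litV11_eq_ite (n m : ℕ) (p : Fin n × Bool) :
    litV11 n m p = if p.2 then V11.pos p.1 else V11.neg p.1 := by
  rcases p with ⟨v, b⟩; cases b <;> rfl

lemma eds_mono {V : Type*} {E D D' : Set (Sym2 V)} (h : D ⊆ D') (hd : EDSDom E D) :
    EDSDom E D' := by
  intro e he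
  rcases hd e he with h1 | ⟨f, hf, v, hv⟩
  · exact Or.inl (h h1)
  · exact Or.inr ⟨f, h hf, v, hv⟩

lemma min_of_single {V : Type*} {E D : Set (Sym2 V)}
    (h : ∀ e ∈ D, ¬ EDSDom E (D \ {e})) : ∀ D' ⊂ D, ¬ EDSDom E D' := by
  intro D' hss hdom
  obtain ⟨e, heD, heD'⟩ := Set.exists_of_ssubset hss
  refine h e heD (eds_mono ?_ hdom)
  intro f hf
  exact ⟨hss.1 hf, fun hfe => heD' ((Set.mem_singleton_iff.mp hfe) ▸ hf)⟩

variable {n m : ℕ} {lit : Fin m → Fin 3 → Fin n × Bool}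

lemma mem_E_p1 {e} (he : e ∈ E11 n m lit) (j : Fin m) (hm : V11.p1 j ∈ e) :
    e = s(V11.p1 j, V11.c1 j) ∨ e = s(V11.p1 j, litV11 n m (lit j 0)) ∨
      e = s(V11.p1 j, litV11 n m (lit j 1)) := by
  rcases he with ⟨j', h|h|h|h|h|h|h⟩ | ⟨i', h|h|h|h|h⟩ | ⟨j', h|h|h⟩ <;> subst h <;>
    simp_all [Sym2.mem_iff, Sym2.eq_iff, litV11_eq_ite, eq_ite_iff, ite_eq_iff]

lemma mem_E_p2 {e} (he : e ∈ E11 n m lit) (j : Fin m) (hm : V11.p2 j ∈ e) :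
    e = s(V11.p2 j, V11.c2 j) ∨ e = s(V11.p2 j, litV11 n m (lit j 2)) := by
  rcases he with ⟨j', h|h|h|h|h|h|h⟩ | ⟨i', h|h|h|h|h⟩ | ⟨j', h|h|h⟩ <;> subst h <;>
    simp_all [Sym2.mem_iff, Sym2.eq_iff, litV11_eq_ite, eq_ite_iff, ite_eq_iff]

lemma mem_E_c3 {e} (he : e ∈ E11 n m lit) (j : Fin m) (hm : V11.c3 j ∈ e) :
    e = s(V11.c1 j, V11.c3 j) ∨ e = s(V11.c2 j, V11.c3 j) ∨ e = s(V11.c3 j, V11.c4 j) := by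
  rcases he with ⟨j', h|h|h|h|h|h|h⟩ | ⟨i', h|h|h|h|h⟩ | ⟨j', h|h|h⟩ <;> subst h <;>
    simp_all [Sym2.mem_iff, Sym2.eq_iff, litV11_eq_ite, eq_ite_iff, ite_eq_iff]

lemma mem_E_c4 {e} (he : e ∈ E11 n m lit) (j : Fin m) (hm : V11.c4 j ∈ e) :
    e = s(V11.c3 j, V11.c4 j) ∨ e = s(V11.c4 j, V11.c5 j) := by
  rcases he with ⟨j', h|h|h|h|h|h|h⟩ | ⟨i', h|h|h|h|h⟩ | ⟨j', h|h|h⟩ <;> subst h <;>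
    simp_all [Sym2.mem_iff, Sym2.eq_iff, litV11_eq_ite, eq_ite_iff, ite_eq_iff]

lemma mem_E_x1 {e} (he : e ∈ E11 n m lit) (i : Fin n) (hm : V11.x1 i ∈ e) :
    e = s(V11.pos i, V11.x1 i) ∨ e = s(V11.neg i, V11.x1 i) ∨ e = s(V11.x1 i, V11.x2 i) := by
  rcases he with ⟨j', h|h|h|h|h|h|h⟩ | ⟨i', h|h|h|h|h⟩ | ⟨j', h|h|h⟩ <;> subst h <;>
    simp_all [Sym2.mem_iff, Sym2.eq_iff, litV11_eq_ite, eq_ite_iff, ite_eq_iff]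

lemma mem_E_x2 {e} (he : e ∈ E11 n m lit) (i : Fin n) (hm : V11.x2 i ∈ e) :
    e = s(V11.x1 i, V11.x2 i) ∨ e = s(V11.x2 i, V11.x3 i) := by
  rcases he with ⟨j', h|h|h|h|h|h|h⟩ | ⟨i', h|h|h|h|h⟩ | ⟨j', h|h|h⟩ <;> subst h <;>
    simp_all [Sym2.mem_iff, Sym2.eq_iff, litV11_eq_ite, eq_ite_iff, ite_eq_iff]


section Forward

def AE (n m : ℕ) (lit : Fin m → Fin 3 → Fin n × Bool) (k : Fin m → Fin 3) (j : Fin m) :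
    Sym2 (V11 n m) :=
  if (k j).val = 2 then s(V11.p1 j, V11.c1 j) else s(V11.p1 j, litV11 n m (lit j (k j)))

def BE (n m : ℕ) (lit : Fin m → Fin 3 → Fin n × Bool) (k : Fin m → Fin 3) (j : Fin m) :
    Sym2 (V11 n m) :=
  if (k j).val = 2 then s(V11.p2 j, litV11 n m (lit j (k j))) else s(V11.p2 j, V11.c2 j)

def DS (n m : ℕ) (lit : Fin m → Fin 3 → Fin n × Bool) (k : Fin m → Fin 3) :
    Set (Sym2 (V11 n m)) :=
  {e | (∃ j, e = s(V11.c3 j, V11.c4 j) ∨ e = s(V11.c4 j, V11.c5 j) ∨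
          e = AE n m lit k j ∨ e = BE n m lit k j) ∨
       (∃ i, e = s(V11.x1 i, V11.x2 i) ∨ e = s(V11.x2 i, V11.x3 i))}

variable {k : Fin m → Fin 3}

lemma AE_two (j : Fin m) (h : (k j).val = 2) :
    AE n m lit k j = s(V11.p1 j, V11.c1 j) := if_pos h

lemma AE_nottwo (j : Fin m) (h : ¬ (k j).val = 2) :
    AE n m lit k j = s(V11.p1 j, litV11 n m (lit j (k j))) := if_neg h

lemma BE_two (j : Fin m) (h : (k j).val = 2) :
    BE n m lit k j = s(V11.p2 j, litV11 n m (lit j (k j))) := if_pos h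

lemma BE_nottwo (j : Fin m) (h : ¬ (k j).val = 2) :
    BE n m lit k j = s(V11.p2 j, V11.c2 j) := if_neg h

lemma DS_mem_char {f} (hf : f ∈ DS n m lit k) :
    (∃ j, f = s(V11.c3 j, V11.c4 j)) ∨ (∃ j, f = s(V11.c4 j, V11.c5 j)) ∨
    (∃ i, f = s(V11.x1 i, V11.x2 i)) ∨ (∃ i, f = s(V11.x2 i, V11.x3 i)) ∨
    (∃ j, (k j).val = 2 ∧ f = s(V11.p1 j, V11.c1 j)) ∨
    (∃ j, ¬ (k j).val = 2 ∧ f = s(V11.p1 j, litV11 n m (lit j (k j)))) ∨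
    (∃ j, (k j).val = 2 ∧ f = s(V11.p2 j, litV11 n m (lit j (k j)))) ∨
    (∃ j, ¬ (k j).val = 2 ∧ f = s(V11.p2 j, V11.c2 j)) := by
  rcases hf with ⟨j', h|h|h|h⟩ | ⟨i', h|h⟩
  · exact Or.inl ⟨j', h⟩
  · exact Or.inr (Or.inl ⟨j', h⟩)
  · by_cases h2 : (k j').val = 2
    · rw [AE_two j' h2] at h
      exact Or.inr (Or.inr (Or.inr (Or.inr (Or.inl ⟨j', h2, h⟩))))
    · rw [AE_nottwo j' h2] at h
      exact Or.inr (Or.inr (Or.inr (Or.inr (Or.inr (Or.inl ⟨j', h2, h⟩)))))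
  · by_cases h2 : (k j').val = 2
    · rw [BE_two j' h2] at h
      exact Or.inr (Or.inr (Or.inr (Or.inr (Or.inr (Or.inr (Or.inl ⟨j', h2, h⟩))))))
    · rw [BE_nottwo j' h2] at h
      exact Or.inr (Or.inr (Or.inr (Or.inr (Or.inr (Or.inr (Or.inr ⟨j', h2, h⟩))))))
  · exact Or.inr (Or.inr (Or.inl ⟨i', h⟩))
  · exact Or.inr (Or.inr (Or.inr (Or.inl ⟨i', h⟩)))

lemma DS_c1 {f} (hf : f ∈ DS n m lit k) (j : Fin m) (hm : V11.c1 j ∈ f) :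
    (k j).val = 2 ∧ f = s(V11.p1 j, V11.c1 j) := by
  rcases DS_mem_char hf with ⟨j',h⟩|⟨j',h⟩|⟨i',h⟩|⟨i',h⟩|⟨j',h2,h⟩|⟨j',h2,h⟩|⟨j',h2,h⟩|⟨j',h2,h⟩ <;>
    subst h <;> simp_all [Sym2.mem_iff, litV11_eq_ite, eq_ite_iff]

lemma DS_c2 {f} (hf : f ∈ DS n m lit k) (j : Fin m) (hm : V11.c2 j ∈ f) :
    ¬ (k j).val = 2 ∧ f = s(V11.p2 j, V11.c2 j) := by
  rcases DS_mem_char hf with ⟨j',h⟩|⟨j',h⟩|⟨i',h⟩|⟨i',h⟩|⟨j',h2,h⟩|⟨j',h2,h⟩|⟨j',h2,h⟩|⟨j',h2,h⟩ <;>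
    subst h <;> simp_all [Sym2.mem_iff, litV11_eq_ite, eq_ite_iff]

lemma DS_p1v {f} (hf : f ∈ DS n m lit k) (j : Fin m) (hm : V11.p1 j ∈ f) :
    f = AE n m lit k j := by
  rcases DS_mem_char hf with ⟨j',h⟩|⟨j',h⟩|⟨i',h⟩|⟨i',h⟩|⟨j',h2,h⟩|⟨j',h2,h⟩|⟨j',h2,h⟩|⟨j',h2,h⟩ <;>
    subst h <;> simp_all [Sym2.mem_iff, litV11_eq_ite, eq_ite_iff]
  · have : j = j' := by simp_all [Sym2.mem_iff]
    subst this; rw [AE_two j h2]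
  · have : j = j' := by simp_all [Sym2.mem_iff, litV11_eq_ite, eq_ite_iff]
    subst this; rw [AE_nottwo j h2, litV11_eq_ite]

lemma DS_p2v {f} (hf : f ∈ DS n m lit k) (j : Fin m) (hm : V11.p2 j ∈ f) :
    f = BE n m lit k j := by
  rcases DS_mem_char hf with ⟨j',h⟩|⟨j',h⟩|⟨i',h⟩|⟨i',h⟩|⟨j',h2,h⟩|⟨j',h2,h⟩|⟨j',h2,h⟩|⟨j',h2,h⟩ <;>
    subst h <;> simp_all [Sym2.mem_iff, litV11_eq_ite, eq_ite_iff]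
  · have : j = j' := by simp_all [Sym2.mem_iff, litV11_eq_ite, eq_ite_iff]
    subst this; rw [BE_two j h2, litV11_eq_ite]
  · have : j = j' := by simp_all [Sym2.mem_iff]
    subst this; rw [BE_nottwo j h2]

lemma DS_c3v {f} (hf : f ∈ DS n m lit k) (j : Fin m) (hm : V11.c3 j ∈ f) :
    f = s(V11.c3 j, V11.c4 j) := by
  rcases DS_mem_char hf with ⟨j',h⟩|⟨j',h⟩|⟨i',h⟩|⟨i',h⟩|⟨j',h2,h⟩|⟨j',h2,h⟩|⟨j',h2,h⟩|⟨j',h2,h⟩ <;>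
    subst h <;> simp_all [Sym2.mem_iff, Sym2.eq_iff, litV11_eq_ite, eq_ite_iff]

lemma DS_c4v {f} (hf : f ∈ DS n m lit k) (j : Fin m) (hm : V11.c4 j ∈ f) :
    f = s(V11.c3 j, V11.c4 j) ∨ f = s(V11.c4 j, V11.c5 j) := by
  rcases DS_mem_char hf with ⟨j',h⟩|⟨j',h⟩|⟨i',h⟩|⟨i',h⟩|⟨j',h2,h⟩|⟨j',h2,h⟩|⟨j',h2,h⟩|⟨j',h2,h⟩ <;>
    subst h <;> simp_all [Sym2.mem_iff, Sym2.eq_iff, litV11_eq_ite, eq_ite_iff]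

lemma DS_c5v {f} (hf : f ∈ DS n m lit k) (j : Fin m) (hm : V11.c5 j ∈ f) :
    f = s(V11.c4 j, V11.c5 j) := by
  rcases DS_mem_char hf with ⟨j',h⟩|⟨j',h⟩|⟨i',h⟩|⟨i',h⟩|⟨j',h2,h⟩|⟨j',h2,h⟩|⟨j',h2,h⟩|⟨j',h2,h⟩ <;>
    subst h <;> simp_all [Sym2.mem_iff, Sym2.eq_iff, litV11_eq_ite, eq_ite_iff]

lemma DS_c6v {f} (hf : f ∈ DS n m lit k) (j : Fin m) (hm : V11.c6 j ∈ f) : False := by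
  rcases DS_mem_char hf with ⟨j',h⟩|⟨j',h⟩|⟨i',h⟩|⟨i',h⟩|⟨j',h2,h⟩|⟨j',h2,h⟩|⟨j',h2,h⟩|⟨j',h2,h⟩ <;>
    subst h <;> simp_all [Sym2.mem_iff, litV11_eq_ite, eq_ite_iff]

lemma DS_x1v {f} (hf : f ∈ DS n m lit k) (i : Fin n) (hm : V11.x1 i ∈ f) :
    f = s(V11.x1 i, V11.x2 i) := by
  rcases DS_mem_char hf with ⟨j',h⟩|⟨j',h⟩|⟨i',h⟩|⟨i',h⟩|⟨j',h2,h⟩|⟨j',h2,h⟩|⟨j',h2,h⟩|⟨j',h2,h⟩ <;>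
    subst h <;> simp_all [Sym2.mem_iff, Sym2.eq_iff, litV11_eq_ite, eq_ite_iff]

lemma DS_x3v {f} (hf : f ∈ DS n m lit k) (i : Fin n) (hm : V11.x3 i ∈ f) :
    f = s(V11.x2 i, V11.x3 i) := by
  rcases DS_mem_char hf with ⟨j',h⟩|⟨j',h⟩|⟨i',h⟩|⟨i',h⟩|⟨j',h2,h⟩|⟨j',h2,h⟩|⟨j',h2,h⟩|⟨j',h2,h⟩ <;>
    subst h <;> simp_all [Sym2.mem_iff, Sym2.eq_iff, litV11_eq_ite, eq_ite_iff]

lemma DS_x4v {f} (hf : f ∈ DS n m lit k) (i : Fin n) (hm : V11.x4 i ∈ f) : False := by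
  rcases DS_mem_char hf with ⟨j',h⟩|⟨j',h⟩|⟨i',h⟩|⟨i',h⟩|⟨j',h2,h⟩|⟨j',h2,h⟩|⟨j',h2,h⟩|⟨j',h2,h⟩ <;>
    subst h <;> simp_all [Sym2.mem_iff, litV11_eq_ite, eq_ite_iff]

lemma DS_litv {T : Fin n → Bool} (hk : ∀ j, T (lit j (k j)).1 = (lit j (k j)).2)
    (j' : Fin m) (v : Fin n) (b : Bool)
    (h3 : (if b then V11.pos v else V11.neg v : V11 n m) = litV11 n m (lit j' (k j'))) :
    T v = b := by
  have hkj := hk j'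
  rw [litV11_eq_ite] at h3
  rcases hB : (lit j' (k j')).2 <;> rw [hB] at hkj h3 <;> cases b <;> simp_all

lemma DS_posv {T : Fin n → Bool} (hk : ∀ j, T (lit j (k j)).1 = (lit j (k j)).2)
    {f} (hf : f ∈ DS n m lit k) (v : Fin n) (hm : V11.pos v ∈ f) : T v = true := by
  rcases DS_mem_char hf with ⟨j',h⟩|⟨j',h⟩|⟨i',h⟩|⟨i',h⟩|⟨j',h2,h⟩|⟨j',h2,h⟩|⟨j',h2,h⟩|⟨j',h2,h⟩ <;>
    subst h <;> rcases Sym2.mem_iff.mp hm with h3|h3 <;>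
      first
        | exact DS_litv hk j' v true (by simpa using h3)
        | exact absurd h3 (by simp)

lemma DS_negv {T : Fin n → Bool} (hk : ∀ j, T (lit j (k j)).1 = (lit j (k j)).2)
    {f} (hf : f ∈ DS n m lit k) (v : Fin n) (hm : V11.neg v ∈ f) : T v = false := by
  rcases DS_mem_char hf with ⟨j',h⟩|⟨j',h⟩|⟨i',h⟩|⟨i',h⟩|⟨j',h2,h⟩|⟨j',h2,h⟩|⟨j',h2,h⟩|⟨j',h2,h⟩ <;>
    subst h <;> rcases Sym2.mem_iff.mp hm with h3|h3 <;>
      first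
        | exact DS_litv hk j' v false (by simpa using h3)
        | exact absurd h3 (by simp)


lemma p1_mem_AE (j : Fin m) : V11.p1 j ∈ AE n m lit k j := by
  unfold AE; split <;> simp

lemma p2_mem_BE (j : Fin m) : V11.p2 j ∈ BE n m lit k j := by
  unfold BE; split <;> simp

lemma AE_mem_DS (j : Fin m) : AE n m lit k j ∈ DS n m lit k := Or.inl ⟨j, by tauto⟩

lemma BE_mem_DS (j : Fin m) : BE n m lit k j ∈ DS n m lit k := Or.inl ⟨j, by tauto⟩

lemma DS_subset_E : DS n m lit k ⊆ E11 n m lit := by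
  intro e he
  rcases DS_mem_char he with ⟨j,h⟩|⟨j,h⟩|⟨i,h⟩|⟨i,h⟩|⟨j,h2,h⟩|⟨j,h2,h⟩|⟨j,h2,h⟩|⟨j,h2,h⟩ <;> subst h
  · exact Or.inl ⟨j, by tauto⟩
  · exact Or.inl ⟨j, by tauto⟩
  · exact Or.inr (Or.inl ⟨i, by tauto⟩)
  · exact Or.inr (Or.inl ⟨i, by tauto⟩)
  · exact Or.inl ⟨j, by tauto⟩
  · have h01 : (k j).val = 0 ∨ (k j).val = 1 := by have := (k j).isLt; omega
    rcases h01 with h0 | h0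
    · have hkj : k j = 0 := Fin.ext (by simpa using h0)
      rw [hkj]; exact Or.inr (Or.inr ⟨j, by tauto⟩)
    · have hkj : k j = 1 := Fin.ext (by simpa using h0)
      rw [hkj]; exact Or.inr (Or.inr ⟨j, by tauto⟩)
  · have hkj : k j = 2 := Fin.ext (by simpa using h2)
    rw [hkj]; exact Or.inr (Or.inr ⟨j, by tauto⟩)
  · exact Or.inl ⟨j, by tauto⟩

lemma U_subset_DS : U11 n m ⊆ DS n m lit k := by
  rintro e (⟨j, h | h⟩ | ⟨i, h | h⟩) <;> subst h
  · exact Or.inl ⟨j, by tauto⟩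
  · exact Or.inl ⟨j, by tauto⟩
  · exact Or.inr ⟨i, by tauto⟩
  · exact Or.inr ⟨i, by tauto⟩

lemma DS_dom : EDSDom (E11 n m lit) (DS n m lit k) := by
  intro e he
  rcases he with ⟨j, h|h|h|h|h|h|h⟩ | ⟨i, h|h|h|h|h⟩ | ⟨j, h|h|h⟩ <;> subst h
  · exact Or.inr ⟨AE n m lit k j, AE_mem_DS j, V11.p1 j, by simp, p1_mem_AE j⟩
  · exact Or.inr ⟨s(V11.c3 j, V11.c4 j), Or.inl ⟨j, by tauto⟩, V11.c3 j, by simp, by simp⟩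
  · exact Or.inr ⟨BE n m lit k j, BE_mem_DS j, V11.p2 j, by simp, p2_mem_BE j⟩
  · exact Or.inr ⟨s(V11.c3 j, V11.c4 j), Or.inl ⟨j, by tauto⟩, V11.c3 j, by simp, by simp⟩
  · exact Or.inl (Or.inl ⟨j, by tauto⟩)
  · exact Or.inl (Or.inl ⟨j, by tauto⟩)
  · exact Or.inr ⟨s(V11.c4 j, V11.c5 j), Or.inl ⟨j, by tauto⟩, V11.c5 j, by simp, by simp⟩
  · exact Or.inr ⟨s(V11.x1 i, V11.x2 i), Or.inr ⟨i, by tauto⟩, V11.x1 i, by simp, by simp⟩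
  · exact Or.inr ⟨s(V11.x1 i, V11.x2 i), Or.inr ⟨i, by tauto⟩, V11.x1 i, by simp, by simp⟩
  · exact Or.inl (Or.inr ⟨i, by tauto⟩)
  · exact Or.inl (Or.inr ⟨i, by tauto⟩)
  · exact Or.inr ⟨s(V11.x2 i, V11.x3 i), Or.inr ⟨i, by tauto⟩, V11.x3 i, by simp, by simp⟩
  · exact Or.inr ⟨AE n m lit k j, AE_mem_DS j, V11.p1 j, by simp, p1_mem_AE j⟩
  · exact Or.inr ⟨AE n m lit k j, AE_mem_DS j, V11.p1 j, by simp, p1_mem_AE j⟩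
  · exact Or.inr ⟨BE n m lit k j, BE_mem_DS j, V11.p2 j, by simp, p2_mem_BE j⟩

lemma DS_min {T : Fin n → Bool} (hk : ∀ j, T (lit j (k j)).1 = (lit j (k j)).2) :
    ∀ e ∈ DS n m lit k, ¬ EDSDom (E11 n m lit) (DS n m lit k \ {e}) := by
  intro e he hdom
  rcases DS_mem_char he with ⟨j,h⟩|⟨j,h⟩|⟨i,h⟩|⟨i,h⟩|⟨j,h2,h⟩|⟨j,h2,h⟩|⟨j,h2,h⟩|⟨j,h2,h⟩ <;> subst h
  · by_cases h2 : (k j).val = 2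
    · rcases hdom s(V11.c2 j, V11.c3 j) (Or.inl ⟨j, by tauto⟩) with hin | ⟨f, ⟨hfD, hfe⟩, v, hv, hvf⟩
      · exact (DS_c2 hin.1 j (by simp)).1 h2
      · rcases Sym2.mem_iff.mp hv with rfl | rfl
        · exact (DS_c2 hfD j hvf).1 h2
        · exact hfe (Set.mem_singleton_iff.mpr (DS_c3v hfD j hvf))
    · rcases hdom s(V11.c1 j, V11.c3 j) (Or.inl ⟨j, by tauto⟩) with hin | ⟨f, ⟨hfD, hfe⟩, v, hv, hvf⟩
      · exact h2 (DS_c1 hin.1 j (by simp)).1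
      · rcases Sym2.mem_iff.mp hv with rfl | rfl
        · exact h2 (DS_c1 hfD j hvf).1
        · exact hfe (Set.mem_singleton_iff.mpr (DS_c3v hfD j hvf))
  · rcases hdom s(V11.c5 j, V11.c6 j) (Or.inl ⟨j, by tauto⟩) with hin | ⟨f, ⟨hfD, hfe⟩, v, hv, hvf⟩
    · exact DS_c6v hin.1 j (by simp)
    · rcases Sym2.mem_iff.mp hv with rfl | rfl
      · exact hfe (Set.mem_singleton_iff.mpr (DS_c5v hfD j hvf))
      · exact DS_c6v hfD j hvf
  · by_cases hT : T i = true
    · rcases hdom s(V11.neg i, V11.x1 i) (Or.inr (Or.inl ⟨i, by tauto⟩)) with hin | ⟨f, ⟨hfD, hfe⟩, v, hv, hvf⟩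
      · simp [DS_negv hk hin.1 i (by simp)] at hT
      · rcases Sym2.mem_iff.mp hv with rfl | rfl
        · simp [DS_negv hk hfD i hvf] at hT
        · exact hfe (Set.mem_singleton_iff.mpr (DS_x1v hfD i hvf))
    · rcases hdom s(V11.pos i, V11.x1 i) (Or.inr (Or.inl ⟨i, by tauto⟩)) with hin | ⟨f, ⟨hfD, hfe⟩, v, hv, hvf⟩
      · exact hT (DS_posv hk hin.1 i (by simp))
      · rcases Sym2.mem_iff.mp hv with rfl | rfl
        · exact hT (DS_posv hk hfD i hvf)
        · exact hfe (Set.mem_singleton_iff.mpr (DS_x1v hfD i hvf))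
  · rcases hdom s(V11.x3 i, V11.x4 i) (Or.inr (Or.inl ⟨i, by tauto⟩)) with hin | ⟨f, ⟨hfD, hfe⟩, v, hv, hvf⟩
    · exact DS_x4v hin.1 i (by simp)
    · rcases Sym2.mem_iff.mp hv with rfl | rfl
      · exact hfe (Set.mem_singleton_iff.mpr (DS_x3v hfD i hvf))
      · exact DS_x4v hfD i hvf
  · rcases hdom s(V11.p1 j, V11.c1 j) (Or.inl ⟨j, by tauto⟩) with hin | ⟨f, ⟨hfD, hfe⟩, v, hv, hvf⟩
    · exact hin.2 rfl
    · rcases Sym2.mem_iff.mp hv with rfl | rfl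
      · exact hfe (Set.mem_singleton_iff.mpr (by rw [DS_p1v hfD j hvf, AE_two j h2]))
      · exact hfe (Set.mem_singleton_iff.mpr (DS_c1 hfD j hvf).2)
  · rcases hdom s(V11.p1 j, V11.c1 j) (Or.inl ⟨j, by tauto⟩) with hin | ⟨f, ⟨hfD, hfe⟩, v, hv, hvf⟩
    · exact h2 (DS_c1 hin.1 j (by simp)).1
    · rcases Sym2.mem_iff.mp hv with rfl | rfl
      · exact hfe (Set.mem_singleton_iff.mpr (by rw [DS_p1v hfD j hvf, AE_nottwo j h2]))
      · exact h2 (DS_c1 hfD j hvf).1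
  · rcases hdom s(V11.p2 j, V11.c2 j) (Or.inl ⟨j, by tauto⟩) with hin | ⟨f, ⟨hfD, hfe⟩, v, hv, hvf⟩
    · exact (DS_c2 hin.1 j (by simp)).1 h2
    · rcases Sym2.mem_iff.mp hv with rfl | rfl
      · exact hfe (Set.mem_singleton_iff.mpr (by rw [DS_p2v hfD j hvf, BE_two j h2]))
      · exact (DS_c2 hfD j hvf).1 h2
  · rcases hdom s(V11.p2 j, V11.c2 j) (Or.inl ⟨j, by tauto⟩) with hin | ⟨f, ⟨hfD, hfe⟩, v, hv, hvf⟩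
    · exact hin.2 rfl
    · rcases Sym2.mem_iff.mp hv with rfl | rfl
      · exact hfe (Set.mem_singleton_iff.mpr (by rw [DS_p2v hfD j hvf, BE_nottwo j h2]))
      · exact hfe (Set.mem_singleton_iff.mpr (DS_c2 hfD j hvf).2)

lemma forward {T : Fin n → Bool} (hT : ∀ j : Fin m, ∃ kk : Fin 3, T (lit j kk).1 = (lit j kk).2) :
    ∃ D : Set (Sym2 (V11 n m)), D ⊆ E11 n m lit ∧ U11 n m ⊆ D ∧
      EDSDom (E11 n m lit) D ∧
      ∀ D' : Set (Sym2 (V11 n m)), D' ⊂ D → ¬ EDSDom (E11 n m lit) D' := by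
  choose k hk using hT
  exact ⟨DS n m lit k, DS_subset_E, U_subset_DS, DS_dom, min_of_single (DS_min hk)⟩

end Forward

section Backward

variable {D : Set (Sym2 (V11 n m))}

lemma var_free (hU : U11 n m ⊆ D)
    (hdom : EDSDom (E11 n m lit) D)
    (hmin : ∀ D' ⊂ D, ¬ EDSDom (E11 n m lit) D') (i : Fin n) :
    (∀ f ∈ D, V11.pos i ∉ f) ∨ (∀ f ∈ D, V11.neg i ∉ f) := by
  have hu : s(V11.x1 i, V11.x2 i) ∈ D := hU (Or.inr ⟨i, Or.inl rfl⟩)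
  have hu2 : s(V11.x2 i, V11.x3 i) ∈ D := hU (Or.inr ⟨i, Or.inr rfl⟩)
  have hmem2 : s(V11.x2 i, V11.x3 i) ∈ D \ {s(V11.x1 i, V11.x2 i)} :=
    ⟨hu2, by simp [Sym2.eq_iff]⟩
  have hnd := hmin _ (Set.sdiff_singleton_ssubset.mpr hu)
  rw [EDSDom] at hnd; push_neg at hnd
  obtain ⟨w, hwE, hw1, hw2⟩ := hnd
  rcases hdom w hwE with hwD | ⟨f, hfD, v, hvw, hvf⟩
  · by_cases hweq : w = s(V11.x1 i, V11.x2 i)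
    · subst hweq
      exact ((hw2 _ hmem2 (V11.x2 i) (by simp)) (by simp)).elim
    · exact absurd ⟨hwD, by simpa using hweq⟩ hw1
  · by_cases hfeq : f = s(V11.x1 i, V11.x2 i)
    · subst hfeq
      rcases Sym2.mem_iff.mp hvf with rfl | rfl
      · rcases mem_E_x1 hwE i hvw with h | h | h <;> subst h
        · left; intro g hgD hpg
          by_cases hgeq : g = s(V11.x1 i, V11.x2 i)
          · subst hgeq; simp at hpg
          · exact (hw2 g ⟨hgD, by simpa using hgeq⟩ (V11.pos i) (by simp)) hpg
        · right; intro g hgD hpg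
          by_cases hgeq : g = s(V11.x1 i, V11.x2 i)
          · subst hgeq; simp at hpg
          · exact (hw2 g ⟨hgD, by simpa using hgeq⟩ (V11.neg i) (by simp)) hpg
        · exact ((hw2 _ hmem2 (V11.x2 i) (by simp)) (by simp)).elim
      · rcases mem_E_x2 hwE i hvw with h | h <;> subst h
        · exact ((hw2 _ hmem2 (V11.x2 i) (by simp)) (by simp)).elim
        · exact absurd ⟨hu2, by simp [Sym2.eq_iff]⟩ hw1
    · exact ((hw2 f ⟨hfD, by simpa using hfeq⟩ v hvw) hvf).elim

lemma clause_sat (hE : D ⊆ E11 n m lit) (hU : U11 n m ⊆ D)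
    (hdom : EDSDom (E11 n m lit) D)
    (hmin : ∀ D' ⊂ D, ¬ EDSDom (E11 n m lit) D') (j : Fin m) :
    ∃ kk : Fin 3, ∃ f ∈ D, litV11 n m (lit j kk) ∈ f := by
  have hu : s(V11.c3 j, V11.c4 j) ∈ D := hU (Or.inl ⟨j, Or.inl rfl⟩)
  have hu2 : s(V11.c4 j, V11.c5 j) ∈ D := hU (Or.inl ⟨j, Or.inr rfl⟩)
  have hmem2 : s(V11.c4 j, V11.c5 j) ∈ D \ {s(V11.c3 j, V11.c4 j)} :=
    ⟨hu2, by simp [Sym2.eq_iff]⟩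
  have hnd := hmin _ (Set.sdiff_singleton_ssubset.mpr hu)
  rw [EDSDom] at hnd; push_neg at hnd
  obtain ⟨w, hwE, hw1, hw2⟩ := hnd
  rcases hdom w hwE with hwD | ⟨f, hfD, v, hvw, hvf⟩
  · by_cases hweq : w = s(V11.c3 j, V11.c4 j)
    · subst hweq
      exact absurd (by simp) ((hw2 _ hmem2 (V11.c4 j) (by simp)))
    · exact absurd ⟨hwD, by simpa using hweq⟩ hw1
  · by_cases hfeq : f = s(V11.c3 j, V11.c4 j)
    · subst hfeq
      rcases Sym2.mem_iff.mp hvf with rfl | rfl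
      · -- v = c3 j
        rcases mem_E_c3 hwE j hvw with h | h | h <;> subst h
        · -- w = s(c1 j, c3 j)
          have hnc1 : ∀ g ∈ D, V11.c1 j ∉ g := by
            intro g hgD hcg
            by_cases hgeq : g = s(V11.c3 j, V11.c4 j)
            · subst hgeq; simp at hcg
            · exact (hw2 g ⟨hgD, by simpa using hgeq⟩ (V11.c1 j) (by simp)) hcg
          rcases hdom s(V11.p1 j, V11.c1 j) (Or.inl ⟨j, by tauto⟩) with
            hin | ⟨g, hgD, v', hv'w, hv'g⟩
          · exact absurd (by simp) (hnc1 _ hin)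
          · rcases Sym2.mem_iff.mp hv'w with rfl | rfl
            · rcases mem_E_p1 (hE hgD) j hv'g with h | h | h <;> subst h
              · exact absurd (by simp) (hnc1 _ hgD)
              · exact ⟨0, _, hgD, by simp⟩
              · exact ⟨1, _, hgD, by simp⟩
            · exact absurd hv'g (hnc1 _ hgD)
        · -- w = s(c2 j, c3 j)
          have hnc2 : ∀ g ∈ D, V11.c2 j ∉ g := by
            intro g hgD hcg
            by_cases hgeq : g = s(V11.c3 j, V11.c4 j)
            · subst hgeq; simp at hcg
            · exact (hw2 g ⟨hgD, by simpa using hgeq⟩ (V11.c2 j) (by simp)) hcg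
          rcases hdom s(V11.p2 j, V11.c2 j) (Or.inl ⟨j, by tauto⟩) with
            hin | ⟨g, hgD, v', hv'w, hv'g⟩
          · exact absurd (by simp) (hnc2 _ hin)
          · rcases Sym2.mem_iff.mp hv'w with rfl | rfl
            · rcases mem_E_p2 (hE hgD) j hv'g with h | h <;> subst h
              · exact absurd (by simp) (hnc2 _ hgD)
              · exact ⟨2, _, hgD, by simp⟩
            · exact absurd hv'g (hnc2 _ hgD)
        · exact absurd (by simp) ((hw2 _ hmem2 (V11.c4 j) (by simp)))
      · -- v = c4 j
        rcases mem_E_c4 hwE j hvw with h | h <;> subst h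
        · exact absurd (by simp) ((hw2 _ hmem2 (V11.c4 j) (by simp)))
        · exact absurd ⟨hu2, by simp [Sym2.eq_iff]⟩ hw1
    · exact ((hw2 f ⟨hfD, by simpa using hfeq⟩ v hvw) hvf).elim

lemma backward (hE : D ⊆ E11 n m lit) (hU : U11 n m ⊆ D)
    (hdom : EDSDom (E11 n m lit) D)
    (hmin : ∀ D' ⊂ D, ¬ EDSDom (E11 n m lit) D') :
    ∃ T : Fin n → Bool, ∀ j : Fin m, ∃ kk : Fin 3, T (lit j kk).1 = (lit j kk).2 := by
  classical
  refine ⟨fun i => decide (∃ f ∈ D, V11.pos i ∈ f), fun j => ?_⟩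
  obtain ⟨kk, f, hfD, hlf⟩ := clause_sat hE hU hdom hmin j
  refine ⟨kk, ?_⟩
  rw [litV11_eq_ite] at hlf
  rcases hB : (lit j kk).2 with _ | _ <;> rw [hB] at hlf <;> simp only [if_true, if_false,
    Bool.false_eq_true, ite_false, ite_true] at hlf
  · rcases var_free hU hdom hmin (lit j kk).1 with hL | hR
    · simp only [hB]
      exact decide_eq_false (fun ⟨g, hg, hpg⟩ => hL g hg hpg)
    · exact absurd hlf (hR f hfD)
  · simp only [hB]
    exact decide_eq_true ⟨f, hfD, hlf⟩

end Backward

end Stmt11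

/-- a (3,B2)-SAT instance is satisfiable iff the constructed graph has a
minimal edge dominating set containing `U`. -/
theorem stmt_11 (n m : ℕ) (lit : Fin m → Fin 3 → Fin n × Bool)
    (hdist : ∀ j : Fin m, Function.Injective fun k : Fin 3 => (lit j k).1)
    (hpos : ∀ v : Fin n,
      (Finset.univ.filter fun p : Fin m × Fin 3 => lit p.1 p.2 = (v, true)).card = 2)
    (hneg : ∀ v : Fin n,
      (Finset.univ.filter fun p : Fin m × Fin 3 => lit p.1 p.2 = (v, false)).card = 2) :
    (∃ T : Fin n → Bool, ∀ j : Fin m, ∃ k : Fin 3, T (lit j k).1 = (lit j k).2) ↔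
      (∃ D : Set (Sym2 (V11 n m)), D ⊆ E11 n m lit ∧ U11 n m ⊆ D ∧
        EDSDom (E11 n m lit) D ∧
        ∀ D' : Set (Sym2 (V11 n m)), D' ⊂ D → ¬ EDSDom (E11 n m lit) D') := by
  constructor
  · rintro ⟨T, hT⟩
    exact Stmt11.forward hT
  · rintro ⟨D, hE, hU, hdom, hmin⟩
    exact Stmt11.backward hE hU hdom hmin
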